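/- Let V be a real vector space and Q a probability measure on a σ-algebra containing all finite-dimensional affine hyperplanes. For each j ≥ 0, there exists a finite or countable family {V_{ji}} of j-dimensional hyperplanes such that, setting W_j := W_{j-1} ∪ ⋃ᵢ V_{ji} (with W_{-1} = ∅), every j-dimensional hyperplane H satisfies Q(H \ W_j) = 0. -/

import Mathlib

open MeasureTheory

/-- `H` is a `j`-dimensional affine hyperplane in `V`: a translate of a
`j`-dimensional linear subspace. -/
def IsAffineHyp {V : Type*} [AddCommGroup V] [Module ℝ V] (j : ℕ) (H : Set V) : Prop :=
  ∃ (T : Submodule ℝ V) (x : V), FiniteDimensional ℝ T ∧ Module.finrank ℝ T = j ∧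
    H = (fun u => x + u) '' (T : Set V)

section Aux
variable {V : Type*} [AddCommGroup V] [Module ℝ V]

/-- Re-base an affine hyperplane at any of its points. -/
lemma IsAffineHyp.rep_of_mem {j : ℕ} {H : Set V} (h : IsAffineHyp j H) {y : V} (hy : y ∈ H) :
    ∃ T : Submodule ℝ V, FiniteDimensional ℝ T ∧ Module.finrank ℝ T = j ∧
      H = (fun u => y + u) '' (T : Set V) := by
  obtain ⟨T, x, hfd, hrk, hH⟩ := h
  obtain ⟨t, ht, hyt⟩ := hH ▸ hy
  refine ⟨T, hfd, hrk, ?_⟩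
  subst hH
  ext z
  constructor
  · rintro ⟨u, hu, rfl⟩
    exact ⟨u - t, sub_mem hu ht, by rw [← hyt]; dsimp only; abel⟩
  · rintro ⟨u, hu, rfl⟩
    exact ⟨t + u, add_mem ht hu, by rw [← hyt]; dsimp only; abel⟩

/-- Distinct `j`-dimensional hyperplanes intersect in the empty set or a
hyperplane of strictly smaller dimension. -/
lemma inter_of_ne {j : ℕ} {H₁ H₂ : Set V} (h₁ : IsAffineHyp j H₁) (h₂ : IsAffineHyp j H₂)
    (hne : H₁ ≠ H₂) : H₁ ∩ H₂ = ∅ ∨ ∃ k < j, IsAffineHyp k (H₁ ∩ H₂) := by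
  rcases Set.eq_empty_or_nonempty (H₁ ∩ H₂) with he | ⟨y, hy₁, hy₂⟩
  · exact Or.inl he
  obtain ⟨T₁, hfd₁, hrk₁, hH₁⟩ := h₁.rep_of_mem hy₁
  obtain ⟨T₂, hfd₂, hrk₂, hH₂⟩ := h₂.rep_of_mem hy₂
  have hinter : H₁ ∩ H₂ = (fun u => y + u) '' ((T₁ ⊓ T₂ : Submodule ℝ V) : Set V) := by
    rw [hH₁, hH₂, ← Set.image_inter (add_right_injective y)]
    rfl
  haveI : FiniteDimensional ℝ (T₁ ⊓ T₂ : Submodule ℝ V) :=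
    Submodule.finiteDimensional_of_le (inf_le_left (b := T₂))
  refine Or.inr ⟨Module.finrank ℝ (T₁ ⊓ T₂ : Submodule ℝ V), ?_, ⟨T₁ ⊓ T₂, y, ‹_›, rfl, hinter⟩⟩
  have hle : Module.finrank ℝ (T₁ ⊓ T₂ : Submodule ℝ V) ≤ j := by
    rw [← hrk₁]
    exact Submodule.finrank_mono (inf_le_left (b := T₂))
  rcases lt_or_eq_of_le hle with h | h
  · exact h
  exfalso
  have e₁ : (T₁ ⊓ T₂ : Submodule ℝ V) = T₁ :=
    Submodule.eq_of_le_of_finrank_eq inf_le_left (by rw [h, hrk₁])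
  have e₂ : (T₁ ⊓ T₂ : Submodule ℝ V) = T₂ :=
    Submodule.eq_of_le_of_finrank_eq inf_le_right (by rw [h, hrk₂])
  exact hne (by rw [hH₁, hH₂, e₁.symm.trans e₂])

variable [MeasurableSpace V] (Q : Measure V)

/-- The recursively defined skeleton. -/
noncomputable def skel : ℕ → Set V
  | j => (⋃ k, ⋃ _ : k < j, skel k) ∪
      ⋃₀ {H | IsAffineHyp j H ∧ Q (H \ ⋃ k, ⋃ _ : k < j, skel k) ≠ 0}

def skelS (j : ℕ) : Set (Set V) :=
  {H | IsAffineHyp j H ∧ Q (H \ ⋃ k, ⋃ _ : k < j, skel Q k) ≠ 0}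

lemma skel_eq (j : ℕ) :
    skel Q j = (⋃ k, ⋃ _ : k < j, skel Q k) ∪ ⋃₀ skelS Q j := by
  rw [skel]; rfl

lemma skel_null {j : ℕ} {H : Set V} (h : IsAffineHyp j H) : Q (H \ skel Q j) = 0 := by
  by_cases h0 : Q (H \ ⋃ k, ⋃ _ : k < j, skel Q k) = 0
  · refine measure_mono_null (fun z hz => ?_) h0
    exact ⟨hz.1, fun hz' => hz.2 ((skel_eq Q j).symm ▸ Or.inl hz')⟩
  · have : H ⊆ skel Q j := by
      rw [skel_eq]
      exact fun z hz => Or.inr ⟨H, ⟨h, h0⟩, hz⟩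
    have : H \ skel Q j = ∅ := Set.diff_eq_empty.2 this
    rw [this, measure_empty]

end Aux


/-- Claim 1 in the proof of Lemma 9: there are sets `W j`, each the union of the
preceding ones and of countably many `j`-dimensional hyperplanes, such that every
`j`-dimensional hyperplane `H` satisfies `Q(H \ W j) = 0`. -/
theorem exists_countable_hyperplane_skeleton {V : Type*} [AddCommGroup V] [Module ℝ V]
    [MeasurableSpace V] (Q : Measure V) [IsProbabilityMeasure Q]
    (hmeas : ∀ (j : ℕ) (H : Set V), IsAffineHyp j H → MeasurableSet H) :
    ∃ W : ℕ → Set V,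
      (∀ j : ℕ, ∃ S : Set (Set V), S.Countable ∧ (∀ H ∈ S, IsAffineHyp j H) ∧
        W j = (⋃ k < j, W k) ∪ ⋃₀ S) ∧
      ∀ (j : ℕ) (H : Set V), IsAffineHyp j H → Q (H \ W j) = 0 := by

  have key : ∀ j : ℕ, (skelS Q j).Countable ∧ MeasurableSet (skel (V := V) Q j) := by
    intro j
    induction j using Nat.strong_induction_on with
    | _ j ih =>
      have hprev : MeasurableSet (⋃ k, ⋃ _ : k < j, skel (V := V) Q k) :=
        MeasurableSet.iUnion fun k => MeasurableSet.iUnion fun hk => (ih k hk).2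
      have hcnt : (skelS Q j).Countable := by
        set p : Set V := ⋃ k, ⋃ _ : k < j, skel (V := V) Q k with hp
        have := Measure.countable_meas_pos_of_disjoint_iUnion₀ (μ := Q)
          (ι := ↥(skelS Q j)) (As := fun H => (H : Set V) \ p)
          (fun H => ((hmeas j H H.2.1).diff hprev).nullMeasurableSet)
          (fun H₁ H₂ hne => by
            have hne' : (H₁ : Set V) ≠ H₂ := fun h => hne (Subtype.ext h)
            have hsub : ((H₁ : Set V) \ p) ∩ ((H₂ : Set V) \ p) ⊆ ((H₁ : Set V) ∩ H₂) \ p :=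
              fun z hz => ⟨⟨hz.1.1, hz.2.1⟩, hz.1.2⟩
            rcases inter_of_ne H₁.2.1 H₂.2.1 hne' with he | ⟨k, hk, hik⟩
            · exact measure_mono_null hsub (by simp [he])
            · refine measure_mono_null (hsub.trans fun z hz => ?_) (skel_null Q hik)
              exact ⟨hz.1, fun hz' => hz.2 (Set.mem_iUnion.2 ⟨k, Set.mem_iUnion.2 ⟨hk, hz'⟩⟩)⟩)
        have huniv : {i : ↥(skelS Q j) | 0 < Q ((i : Set V) \ p)} = Set.univ := by
          ext i
          simp only [Set.mem_setOf_eq, Set.mem_univ, iff_true]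
          exact pos_iff_ne_zero.2 i.2.2
        rw [huniv] at this
        have : Countable ↥(skelS Q j) := Set.countable_univ_iff.mp this
        exact Set.countable_coe_iff.mpr this
      refine ⟨hcnt, ?_⟩
      rw [skel_eq]
      exact hprev.union (MeasurableSet.sUnion hcnt fun H hH => hmeas j H hH.1)
  refine ⟨skel Q, fun j => ⟨skelS Q j, (key j).1, fun H hH => hH.1, ?_⟩, fun j H hH => skel_null Q hH⟩
  rw [skel_eq]
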